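/- Characterisation of System P for preferential propositional dependence logic: for every preferential model W = (S, ℓ, ≺) for PDL, the following are equivalent: (i) the entailment relation ⊢_W satisfies System P; (ii) W satisfies property (△); (iii) property (⋆) holds for all PDL-formulas φ, ψ. -/

import Mathlib

/-- PDL-formulas in negation normal form over variables `V`,
including dependence atoms `dep [a₁,…,a_k] b`. -/
inductive PDL (V : Type) : Type
  | pos : V → PDL V
  | neg : V → PDL V
  | bot : PDL V
  | top : PDL V
  | dep : List V → V → PDL V
  | conj : PDL V → PDL V → PDL V
  | disj : PDL V → PDL V → PDL V

/-- Team semantics of PDL-formulas: a team is a set of valuations `V → Bool`. -/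
def PDL.tsat {V : Type} : PDL V → Set (V → Bool) → Prop
  | .pos p, X => ∀ v ∈ X, v p = true
  | .neg p, X => ∀ v ∈ X, v p = false
  | .bot, X => X = ∅
  | .top, _ => True
  | .dep as b, X => ∀ v ∈ X, ∀ v' ∈ X, (∀ a ∈ as, v a = v' a) → v b = v' b
  | .conj φ ψ, X => PDL.tsat φ X ∧ PDL.tsat ψ X
  | .disj φ ψ, X => ∃ Y Z : Set (V → Bool), X = Y ∪ Z ∧ PDL.tsat φ Y ∧ PDL.tsat ψ Z

/-- A preferential model for PDL over the variables `V`: a set of states `S`,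
a labelling of states by teams, and a smooth strict partial order on states. -/
structure PrefModel (V : Type) where
  S : Type
  label : S → Set (V → Bool)
  lt : S → S → Prop
  irrefl : ∀ s, ¬ lt s s
  trans : ∀ {s t u}, lt s t → lt t u → lt s u
  smooth : ∀ (φ : PDL V) (s : S), PDL.tsat φ (label s) →
    (∀ s', PDL.tsat φ (label s') → ¬ lt s' s) ∨
      ∃ s', PDL.tsat φ (label s') ∧ (∀ s'', PDL.tsat φ (label s'') → ¬ lt s'' s') ∧ lt s' s

/-- `s` is a `≺`-minimal state among those whose label satisfies `φ`. -/
def PrefModel.minimal {V : Type} (W : PrefModel V) (φ : PDL V) (s : W.S) : Prop :=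
  PDL.tsat φ (W.label s) ∧ ∀ s', PDL.tsat φ (W.label s') → ¬ W.lt s' s

/-- Preferential entailment `φ ⊢_W ψ`. -/
def PrefModel.ent {V : Type} (W : PrefModel V) (φ ψ : PDL V) : Prop :=
  ∀ s, W.minimal φ s → PDL.tsat ψ (W.label s)

/-- `min(⟦φ⟧, ≺)`: the set of teams labelling `≺`-minimal states of `S(φ)`. -/
def PrefModel.minTeams {V : Type} (W : PrefModel V) (φ : PDL V) :
    Set (Set (V → Bool)) :=
  {X | ∃ s, W.minimal φ s ∧ W.label s = X}

/-- Property (⋆) for formulas `φ, ψ`: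
`min(⟦φ∨ψ⟧, ≺) ⊆ min(⟦φ⟧, ≺) ∪ min(⟦ψ⟧, ≺)`. -/
def PrefModel.star {V : Type} (W : PrefModel V) (φ ψ : PDL V) : Prop :=
  W.minTeams (.disj φ ψ) ⊆ W.minTeams φ ∪ W.minTeams ψ

/-- Property (△): every state labelled by a team of size `> 1` has a strictly
preferred state labelled by a proper subteam. -/
def PrefModel.triangle {V : Type} (W : PrefModel V) : Prop :=
  ∀ s : W.S, 1 < (W.label s).ncard →
    ∃ s' : W.S, W.label s' ⊂ W.label s ∧ W.lt s' s

/-- System P for the preferential entailment `⊢_W`: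
(Ref), (LLE), (RW), (Cut), (CM) and (Or). -/
def PrefModel.systemP {V : Type} (W : PrefModel V) : Prop :=
  (∀ φ : PDL V, W.ent φ φ) ∧
  (∀ φ ψ γ : PDL V,
    {X : Set (V → Bool) | PDL.tsat φ X} = {X : Set (V → Bool) | PDL.tsat ψ X} →
    W.ent φ γ → W.ent ψ γ) ∧
  (∀ φ ψ γ : PDL V,
    {X : Set (V → Bool) | PDL.tsat φ X} ⊆ {X : Set (V → Bool) | PDL.tsat ψ X} →
    W.ent γ φ → W.ent γ ψ) ∧
  (∀ φ ψ γ : PDL V, W.ent (.conj φ ψ) γ → W.ent φ ψ → W.ent φ γ) ∧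
  (∀ φ ψ γ : PDL V, W.ent φ ψ → W.ent φ γ → W.ent (.conj φ ψ) γ) ∧
  (∀ φ ψ γ : PDL V, W.ent φ γ → W.ent ψ γ → W.ent (.disj φ ψ) γ)

namespace PDLaux

variable {V : Type}

/-- The empty team satisfies every PDL formula. -/
lemma tsat_empty (φ : PDL V) : PDL.tsat φ (∅ : Set (V → Bool)) := by
  induction φ with
  | pos p => intro v hv; exact absurd hv (Set.notMem_empty v)
  | neg p => intro v hv; exact absurd hv (Set.notMem_empty v)
  | bot => rfl
  | top => trivial
  | dep as b => intro v hv; exact absurd hv (Set.notMem_empty v)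
  | conj φ ψ ihφ ihψ => exact ⟨ihφ, ihψ⟩
  | disj φ ψ ihφ ihψ => exact ⟨∅, ∅, by simp, ihφ, ihψ⟩

/-- PDL is downward closed. -/
lemma tsat_mono {φ : PDL V} {X Y : Set (V → Bool)} (h : PDL.tsat φ X) (hYX : Y ⊆ X) :
    PDL.tsat φ Y := by
  induction φ generalizing X Y with
  | pos p => intro v hv; exact h v (hYX hv)
  | neg p => intro v hv; exact h v (hYX hv)
  | bot => exact Set.subset_eq_empty (h ▸ hYX) rfl
  | top => trivial
  | dep as b => intro v hv v' hv' ha; exact h v (hYX hv) v' (hYX hv') ha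
  | conj φ ψ ihφ ihψ => exact ⟨ihφ h.1 hYX, ihψ h.2 hYX⟩
  | disj φ ψ ihφ ihψ =>
    obtain ⟨A, B, hX, hA, hB⟩ := h
    refine ⟨Y ∩ A, Y ∩ B, ?_, ihφ hA Set.inter_subset_right, ihψ hB Set.inter_subset_right⟩
    rw [← Set.inter_union_distrib_left, Set.inter_eq_left.2 (hX ▸ hYX)]

/-- A state satisfying `φ` entails the whole disjunction. -/
lemma tsat_disj_left {φ ψ : PDL V} {X : Set (V → Bool)} (h : PDL.tsat φ X) :
    PDL.tsat (PDL.disj φ ψ) X :=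
  ⟨X, ∅, by simp, h, tsat_empty ψ⟩

def lit (v : V → Bool) (a : V) : PDL V := if v a then .pos a else .neg a

lemma tsat_lit {v : V → Bool} {a : V} {Y : Set (V → Bool)} :
    PDL.tsat (lit v a) Y ↔ ∀ w ∈ Y, w a = v a := by
  unfold lit
  by_cases h : v a = true
  · simp only [h, if_true]; simp [PDL.tsat, h]
  · simp only [Bool.not_eq_true] at h
    simp only [h, Bool.false_eq_true, if_false]; simp [PDL.tsat, h]

def conjList : List (PDL V) → PDL V
  | [] => .top
  | φ :: l => .conj φ (conjList l)

lemma tsat_conjList {l : List (PDL V)} {Y : Set (V → Bool)} :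
    PDL.tsat (conjList l) Y ↔ ∀ φ ∈ l, PDL.tsat φ Y := by
  induction l with
  | nil => simp [conjList, PDL.tsat]
  | cons φ l ih => simp [conjList, PDL.tsat, ih]

variable [Fintype V]

/-- Characteristic formula of a single valuation: satisfied by exactly the subteams of `{v}`. -/
noncomputable def charF (v : V → Bool) : PDL V := conjList (Finset.univ.toList.map (lit v))

lemma tsat_charF {v : V → Bool} {Y : Set (V → Bool)} :
    PDL.tsat (charF v) Y ↔ ∀ w ∈ Y, w = v := by
  unfold charF
  rw [tsat_conjList]
  constructor
  · intro h w hw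
    funext a
    exact (tsat_lit.1 (h (lit v a)
      (List.mem_map.2 ⟨a, Finset.mem_toList.2 (Finset.mem_univ a), rfl⟩))) w hw
  · intro h φ hφ
    obtain ⟨a, -, rfl⟩ := List.mem_map.1 hφ
    exact tsat_lit.2 (fun w hw => by rw [h w hw])

noncomputable def disjList : List (V → Bool) → PDL V
  | [] => .bot
  | v :: l => .disj (charF v) (disjList l)

lemma tsat_disjList {l : List (V → Bool)} {Y : Set (V → Bool)} :
    PDL.tsat (disjList l) Y ↔ Y ⊆ {w | w ∈ l} := by
  induction l generalizing Y with
  | nil =>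
    show Y = ∅ ↔ _
    simp [Set.subset_empty_iff]
  | cons v l ih =>
    show PDL.tsat (PDL.disj (charF v) (disjList l)) Y ↔ Y ⊆ {w | w ∈ v :: l}
    constructor
    · rintro ⟨A, B, rfl, hA, hB⟩ w hw
      rcases hw with hw | hw
      · exact (tsat_charF.1 hA w hw) ▸ List.mem_cons_self
      · exact List.mem_cons_of_mem v (ih.1 hB hw)
    · intro hY
      refine ⟨Y ∩ {v}, Y ∩ {w | w ∈ l}, ?_, ?_, ?_⟩
      · apply Set.Subset.antisymm
        · intro w hw
          rcases List.mem_cons.1 (hY hw) with h | h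
          · exact Or.inl ⟨hw, h⟩
          · exact Or.inr ⟨hw, h⟩
        · exact Set.union_subset Set.inter_subset_left Set.inter_subset_left
      · exact tsat_charF.2 (fun w hw => hw.2)
      · exact ih.2 Set.inter_subset_right

/-- `theta X` is satisfied by exactly the subteams of `X`. -/
noncomputable def theta (X : Set (V → Bool)) : PDL V :=
  disjList (Set.toFinite X).toFinset.toList

lemma tsat_theta {X Y : Set (V → Bool)} : PDL.tsat (theta X) Y ↔ Y ⊆ X := by
  unfold theta
  rw [tsat_disjList]
  have : {w | w ∈ (Set.toFinite X).toFinset.toList} = X := by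
    ext w; simp
  rw [this]

/-- `phiF X p`: subteams of `X` on which `p` is true. -/
noncomputable def phiF (X : Set (V → Bool)) (p : V) : PDL V := .conj (theta X) (.pos p)

/-- `psiF X p`: subteams of `X` on which `p` is false. -/
noncomputable def psiF (X : Set (V → Bool)) (p : V) : PDL V := .conj (theta X) (.neg p)

/-- `gamF X p`: subteams of `X` on which `p` is constant. -/
noncomputable def gamF (X : Set (V → Bool)) (p : V) : PDL V := .conj (theta X) (.dep [] p)

lemma tsat_phiF {X Y : Set (V → Bool)} {p : V} :
    PDL.tsat (phiF X p) Y ↔ Y ⊆ X ∧ ∀ w ∈ Y, w p = true := by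
  show (PDL.tsat (theta X) Y ∧ _) ↔ _
  rw [tsat_theta]; rfl

lemma tsat_psiF {X Y : Set (V → Bool)} {p : V} :
    PDL.tsat (psiF X p) Y ↔ Y ⊆ X ∧ ∀ w ∈ Y, w p = false := by
  show (PDL.tsat (theta X) Y ∧ _) ↔ _
  rw [tsat_theta]; rfl

lemma tsat_gamF {X Y : Set (V → Bool)} {p : V} :
    PDL.tsat (gamF X p) Y ↔ Y ⊆ X ∧ ∀ w ∈ Y, ∀ w' ∈ Y, w p = w' p := by
  show (PDL.tsat (theta X) Y ∧ PDL.tsat (.dep [] p) Y) ↔ _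
  rw [tsat_theta]
  constructor
  · rintro ⟨h1, h2⟩
    exact ⟨h1, fun w hw w' hw' => h2 w hw w' hw' (by simp)⟩
  · rintro ⟨h1, h2⟩
    exact ⟨h1, fun w hw w' hw' _ => h2 w hw w' hw'⟩

lemma tsat_phi_disj_psi {X Y : Set (V → Bool)} {p : V} :
    PDL.tsat (PDL.disj (phiF X p) (psiF X p)) Y ↔ Y ⊆ X := by
  constructor
  · rintro ⟨A, B, rfl, hA, hB⟩
    exact Set.union_subset (tsat_phiF.1 hA).1 (tsat_psiF.1 hB).1
  · intro hY
    refine ⟨{w ∈ Y | w p = true}, {w ∈ Y | w p = false}, ?_, ?_, ?_⟩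
    · apply Set.Subset.antisymm
      · intro w hw
        cases h : w p
        · exact Or.inr ⟨hw, h⟩
        · exact Or.inl ⟨hw, h⟩
      · exact Set.union_subset (fun w hw => hw.1) (fun w hw => hw.1)
    · exact tsat_phiF.2 ⟨fun w hw => hY hw.1, fun w hw => hw.2⟩
    · exact tsat_psiF.2 ⟨fun w hw => hY hw.1, fun w hw => hw.2⟩

lemma phiF_imp_gamF {X Y : Set (V → Bool)} {p : V} (h : PDL.tsat (phiF X p) Y) :
    PDL.tsat (gamF X p) Y := by
  rw [tsat_phiF] at h
  exact tsat_gamF.2 ⟨h.1, fun w hw w' hw' => by rw [h.2 w hw, h.2 w' hw']⟩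

lemma psiF_imp_gamF {X Y : Set (V → Bool)} {p : V} (h : PDL.tsat (psiF X p) Y) :
    PDL.tsat (gamF X p) Y := by
  rw [tsat_psiF] at h
  exact tsat_gamF.2 ⟨h.1, fun w hw w' hw' => by rw [h.2 w hw, h.2 w' hw']⟩

/-- Key construction: for a state `s` with `|label s| > 1`, pick two valuations in the
label differing at `p`; then either we get a (△)-witness for `s`, or there is a minimal
state of `S(phiF ∨ psiF)` labelled exactly by `label s`. -/
lemma key_lemma (W : PrefModel V) (s : W.S) {p : V}
    (hs : PDL.tsat (PDL.disj (phiF (W.label s) p) (psiF (W.label s) p)) (W.label s)) :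
    (∃ s', W.label s' ⊂ W.label s ∧ W.lt s' s) ∨
      ∃ u, W.minimal (PDL.disj (phiF (W.label s) p) (psiF (W.label s) p)) u ∧
        W.label u = W.label s := by
  rcases W.smooth _ s hs with h | ⟨s', hs'1, hs'2, hs'3⟩
  · exact Or.inr ⟨s, ⟨hs, h⟩, rfl⟩
  · have hsub : W.label s' ⊆ W.label s := tsat_phi_disj_psi.1 hs'1
    by_cases heq : W.label s' = W.label s
    · exact Or.inr ⟨s', ⟨hs'1, hs'2⟩, heq⟩
    · exact Or.inl ⟨s', ⟨hsub, fun h => heq (Set.Subset.antisymm hsub h)⟩, hs'3⟩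

/-- (△) implies (⋆) for all formulas. -/
lemma triangle_to_star (W : PrefModel V) (ht : W.triangle) (φ ψ : PDL V) :
    W.star φ ψ := by
  rintro X ⟨s, ⟨hsat, hmin⟩, rfl⟩
  -- The minimal state's label satisfies φ or ψ.
  have hkey : PDL.tsat φ (W.label s) ∨ PDL.tsat ψ (W.label s) := by
    by_contra hcon
    push_neg at hcon
    obtain ⟨A, B, hAB, hA, hB⟩ := id hsat
    have hAne : A ≠ W.label s := fun h => hcon.1 (h ▸ hA)
    have hBne : B ≠ W.label s := fun h => hcon.2 (h ▸ hB)
    have hAs : A ⊆ W.label s := hAB ▸ Set.subset_union_left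
    have hBs : B ⊆ W.label s := hAB ▸ Set.subset_union_right
    -- produce two distinct elements of the label
    obtain ⟨a, ha⟩ : ∃ a, a ∈ W.label s ∧ a ∉ A := by
      by_contra h
      push_neg at h
      exact hAne (Set.Subset.antisymm hAs (fun x hx => h x hx))
    obtain ⟨b, hb⟩ : ∃ b, b ∈ W.label s ∧ b ∉ B := by
      by_contra h
      push_neg at h
      exact hBne (Set.Subset.antisymm hBs (fun x hx => h x hx))
    have hab : a ≠ b := by
      rintro rfl
      rcases hAB ▸ ha.1 with h | h
      · exact ha.2 h
      · exact hb.2 h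
    have hcard : 1 < (W.label s).ncard :=
      (Set.one_lt_ncard_iff (Set.toFinite _)).2 ⟨a, b, ha.1, hb.1, hab⟩
    obtain ⟨s', hs'1, hs'2⟩ := ht s hcard
    exact hmin s' (tsat_mono hsat hs'1.1) hs'2
  -- In either case, s is minimal for the disjunct it satisfies.
  rcases hkey with h | h
  · exact Or.inl ⟨s, ⟨h, fun s'' h'' => hmin s'' (tsat_disj_left h'')⟩, rfl⟩
  · refine Or.inr ⟨s, ⟨h, fun s'' h'' => hmin s'' ⟨∅, W.label s'', by simp, tsat_empty φ, h''⟩⟩, rfl⟩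

/-- From `|label s| > 1`, get a variable on which two members of the label differ. -/
lemma exists_split (W : PrefModel V) (s : W.S) (h : 1 < (W.label s).ncard) :
    ∃ p : V, ∃ v ∈ W.label s, ∃ w ∈ W.label s, v p ≠ w p := by
  obtain ⟨v, w, hv, hw, hvw⟩ := (Set.one_lt_ncard_iff (Set.toFinite _)).1 h
  have : ∃ p, v p ≠ w p := by
    by_contra hc
    push_neg at hc
    exact hvw (funext hc)
  obtain ⟨p, hp⟩ := this
  exact ⟨p, v, hv, w, hw, hp⟩

/-- (⋆) for all formulas implies (△). -/
lemma star_to_triangle (W : PrefModel V) (hst : ∀ φ ψ : PDL V, W.star φ ψ) :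
    W.triangle := by
  intro s hcard
  obtain ⟨p, v, hv, w, hw, hp⟩ := exists_split W s hcard
  have hs : PDL.tsat (PDL.disj (phiF (W.label s) p) (psiF (W.label s) p)) (W.label s) :=
    tsat_phi_disj_psi.2 (subset_refl _)
  rcases key_lemma W s hs with h | ⟨u, humin, hulab⟩
  · exact h
  · exfalso
    have : W.label u ∈ W.minTeams (PDL.disj (phiF (W.label s) p) (psiF (W.label s) p)) :=
      ⟨u, humin, rfl⟩
    rcases hst _ _ this with ⟨t, htmin, htlab⟩ | ⟨t, htmin, htlab⟩
    · have := (tsat_phiF.1 htmin.1).2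
      rw [htlab, hulab] at this
      exact hp ((this v hv).trans (this w hw).symm)
    · have := (tsat_psiF.1 htmin.1).2
      rw [htlab, hulab] at this
      exact hp ((this v hv).trans (this w hw).symm)

/-- System P implies (△) (only the (Or) rule is needed). -/
lemma systemP_to_triangle (W : PrefModel V) (hP : W.systemP) : W.triangle := by
  intro s hcard
  obtain ⟨p, v, hv, w, hw, hp⟩ := exists_split W s hcard
  have hs : PDL.tsat (PDL.disj (phiF (W.label s) p) (psiF (W.label s) p)) (W.label s) :=
    tsat_phi_disj_psi.2 (subset_refl _)
  rcases key_lemma W s hs with h | ⟨u, humin, hulab⟩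
  · exact h
  · exfalso
    have hOr := hP.2.2.2.2.2 (phiF (W.label s) p) (psiF (W.label s) p) (gamF (W.label s) p)
      (fun t ht => phiF_imp_gamF ht.1) (fun t ht => psiF_imp_gamF ht.1)
    have := (tsat_gamF.1 (hOr u humin)).2
    rw [hulab] at this
    exact hp (this v hv w hw)

/-- (△) implies System P. -/
lemma triangle_to_systemP (W : PrefModel V) (ht : W.triangle) : W.systemP := by
  refine ⟨?_, ?_, ?_, ?_, ?_, ?_⟩
  · -- Ref
    exact fun φ s hs => hs.1
  · -- LLE
    intro φ ψ γ hset h s hs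
    have h1 : PDL.tsat φ (W.label s) := by
      have := hs.1
      rw [← Set.mem_setOf_eq (p := fun X => PDL.tsat ψ X), ← hset] at this
      exact this
    refine h s ⟨h1, fun s' hs' => ?_⟩
    have : PDL.tsat ψ (W.label s') := by
      rw [← Set.mem_setOf_eq (p := fun X => PDL.tsat ψ X), ← hset]
      exact hs'
    exact hs.2 s' this
  · -- RW
    intro φ ψ γ hsub h s hs
    exact hsub (h s hs)
  · -- Cut
    intro φ ψ γ hc hps s hs
    have hψ : PDL.tsat ψ (W.label s) := hps s hs
    exact hc s ⟨⟨hs.1, hψ⟩, fun s' hs' => hs.2 s' hs'.1⟩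
  · -- CM
    intro φ ψ γ hps hpg s hs
    rcases W.smooth φ s hs.1.1 with h | ⟨s', hs'1, hs'2, hs'3⟩
    · exact hpg s ⟨hs.1.1, h⟩
    · exact absurd hs'3 (hs.2 s' ⟨hs'1, hps s' ⟨hs'1, hs'2⟩⟩)
  · -- Or
    intro φ ψ γ h1 h2 s hs
    rcases triangle_to_star W ht φ ψ ⟨s, hs, rfl⟩ with ⟨t, htmin, htlab⟩ | ⟨t, htmin, htlab⟩
    · exact htlab ▸ h1 t htmin
    · exact htlab ▸ h2 t htmin

end PDLaux

/-- Characterisation of System P for preferential propositional dependence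
logic: `⊢_W` satisfies System P iff `W` satisfies (△) iff (⋆) holds for all
PDL-formulas. -/
theorem PDL_SystemP_characterisation {V : Type} [Fintype V] [Nonempty V]
    (W : PrefModel V) :
    (W.systemP ↔ W.triangle) ∧
      (W.triangle ↔ ∀ φ ψ : PDL V, W.star φ ψ) := by
  exact ⟨⟨PDLaux.systemP_to_triangle W, PDLaux.triangle_to_systemP W⟩,
    ⟨PDLaux.triangle_to_star W, PDLaux.star_to_triangle W⟩⟩
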